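/- Let n ≥ 1 and m ≥ 2, let s_1,…,s_m, y_1,…,y_m ∈ ℝⁿ satisfy s_i^T y_i > 0 for all i ∈ {1,…,m}, and suppose that for some j ∈ {1,…,m−1} and some nonzero τ ∈ ℝ one has s_j = τ s_{j+1}. Then for every symmetric positive definite W ∈ ℝ^{n×n}, BFGS(W, (s_1,…,s_m), (y_1,…,y_m)) = BFGS(W, (s_1,…,s_{j−1}, s_{j+1},…,s_m), (y_1,…,y_{j−1}, y_{j+1},…,y_m)); that is, the BFGS matrix obtained using all m pairs equals the BFGS matrix obtained by skipping the pair (s_j, y_j). -/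

import Mathlib

open Matrix

/-- One BFGS update of the matrix `W` with the curvature pair `(s, y)`:
`W ← (I − ρ y sᵀ)ᵀ W (I − ρ y sᵀ) + ρ s sᵀ` with `ρ = 1/(sᵀy)`. -/
noncomputable def bfgsUpdate {n : ℕ} (W : Matrix (Fin n) (Fin n) ℝ)
    (s y : Fin n → ℝ) : Matrix (Fin n) (Fin n) ℝ :=
  let ρ : ℝ := 1 / (s ⬝ᵥ y)
  let U : Matrix (Fin n) (Fin n) ℝ := 1 - ρ • Matrix.vecMulVec y s
  Uᵀ * W * U + ρ • Matrix.vecMulVec s s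

/-- The BFGS matrix obtained from the initial matrix `W` by applying, in order
`j = 0, 1, …, m−1`, the BFGS update with the pair `(S j, Y j)`. -/
noncomputable def bfgs {n : ℕ} (W : Matrix (Fin n) (Fin n) ℝ) {m : ℕ}
    (S Y : Fin m → Fin n → ℝ) : Matrix (Fin n) (Fin n) ℝ :=
  (List.finRange m).foldl (fun Wb j => bfgsUpdate Wb (S j) (Y j)) W

/-- The order-preserving map `Fin (m-1) → Fin m` that skips the index `j`. -/
def skipIdx {m : ℕ} (j : Fin m) (i : Fin (m - 1)) : Fin m :=
  if h : (i : ℕ) < (j : ℕ) then ⟨(i : ℕ), by omega⟩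
  else ⟨(i : ℕ) + 1, by have := i.isLt; omega⟩

lemma vecMulVec_mul_vecMulVec {n : ℕ} (a b c d : Fin n → ℝ) :
    vecMulVec a b * vecMulVec c d = (b ⬝ᵥ c) • vecMulVec a d := by
  ext i k
  simp only [mul_apply, vecMulVec_apply, Matrix.smul_apply, smul_eq_mul, dotProduct,
    Finset.sum_mul, Finset.mul_sum]
  apply Finset.sum_congr rfl
  intro x _
  ring

lemma bfgsUpdate_parallel {n : ℕ} (W : Matrix (Fin n) (Fin n) ℝ)
    (s₁ y₁ s₂ y₂ : Fin n → ℝ) (h2 : s₂ ⬝ᵥ y₂ ≠ 0)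
    (τ : ℝ) (hτ : τ ≠ 0) (hs : s₁ = τ • s₂) :
    bfgsUpdate (bfgsUpdate W s₁ y₁) s₂ y₂ = bfgsUpdate W s₂ y₂ := by
  set ρ₁ : ℝ := 1 / (s₁ ⬝ᵥ y₁) with hρ₁
  set ρ₂ : ℝ := 1 / (s₂ ⬝ᵥ y₂) with hρ₂
  set U₁ : Matrix (Fin n) (Fin n) ℝ := 1 - ρ₁ • vecMulVec y₁ s₁ with hU₁
  set U₂ : Matrix (Fin n) (Fin n) ℝ := 1 - ρ₂ • vecMulVec y₂ s₂ with hU₂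
  have key : ∀ a : Fin n → ℝ, vecMulVec a s₁ * U₂ = 0 := by
    intro a
    rw [hU₂, Matrix.mul_sub, Matrix.mul_one, Matrix.mul_smul,
      vecMulVec_mul_vecMulVec]
    have hd : s₁ ⬝ᵥ y₂ = τ * (s₂ ⬝ᵥ y₂) := by
      rw [hs]; simp [smul_dotProduct]
    have h1 : vecMulVec a s₁ = τ • vecMulVec a s₂ := by
      rw [hs]; ext i k; simp [vecMulVec_apply]; ring
    have he : ρ₂ * (τ * (s₂ ⬝ᵥ y₂)) = τ := by
      rw [hρ₂]; field_simp
    rw [hd, h1, smul_smul, he, sub_self]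
  have hU12 : U₁ * U₂ = U₂ := by
    rw [hU₁, Matrix.sub_mul, Matrix.one_mul, Matrix.smul_mul, key, smul_zero,
      sub_zero]
  show (U₂ᵀ * (U₁ᵀ * W * U₁ + ρ₁ • vecMulVec s₁ s₁) * U₂ + ρ₂ • vecMulVec s₂ s₂)
      = U₂ᵀ * W * U₂ + ρ₂ • vecMulVec s₂ s₂
  congr 1
  rw [Matrix.mul_add, Matrix.add_mul]
  have h0 : U₂ᵀ * (ρ₁ • vecMulVec s₁ s₁) * U₂ = 0 := by
    rw [Matrix.mul_smul, Matrix.smul_mul, Matrix.mul_assoc, key, Matrix.mul_zero,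
      smul_zero]
  rw [h0, add_zero]
  calc U₂ᵀ * (U₁ᵀ * W * U₁) * U₂
      = (U₁ * U₂)ᵀ * W * (U₁ * U₂) := by
        rw [Matrix.transpose_mul]
        simp only [Matrix.mul_assoc]
    _ = U₂ᵀ * W * U₂ := by rw [hU12]

theorem bfgs_skip_parallel_consecutive {n m : ℕ} (hn : 1 ≤ n) (hm : 2 ≤ m)
    (S Y : Fin m → Fin n → ℝ)
    (hpos : ∀ i : Fin m, 0 < S i ⬝ᵥ Y i)
    (j : Fin m) (hj : (j : ℕ) + 1 < m)
    (τ : ℝ) (hτ : τ ≠ 0)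
    (hs : S j = τ • S ⟨(j : ℕ) + 1, hj⟩)
    (W : Matrix (Fin n) (Fin n) ℝ) (hW : W.PosDef) :
    bfgs W S Y = bfgs W (S ∘ skipIdx j) (Y ∘ skipIdx j) := by
  classical
  set F : Matrix (Fin n) (Fin n) ℝ → ℕ → Matrix (Fin n) (Fin n) ℝ :=
    fun Wb i => if h : i < m then bfgsUpdate Wb (S ⟨i, h⟩) (Y ⟨i, h⟩) else Wb with hF
  have hA : bfgs W S Y = (List.range m).foldl F W := by
    rw [bfgs, ← List.map_coe_finRange_eq_range, List.foldl_map]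
    congr 1
    funext Wb a
    simp [hF, a.isLt]
  have hB : bfgs W (S ∘ skipIdx j) (Y ∘ skipIdx j)
      = ((List.range (m-1)).map (fun i => if i < (j:ℕ) then i else i + 1)).foldl F W := by
    rw [bfgs, ← List.map_coe_finRange_eq_range (n := m-1), List.foldl_map, List.foldl_map]
    congr 1
    funext Wb a
    have ha : (a : ℕ) < m - 1 := a.isLt
    by_cases hc : (a : ℕ) < (j : ℕ)
    · simp only [if_pos hc, Function.comp_apply, skipIdx, dif_pos hc, hF]
      rw [dif_pos (by omega : (a:ℕ) < m)]
    · simp only [if_neg hc, Function.comp_apply, skipIdx, dif_neg hc, hF]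
      rw [dif_pos (by omega : (a:ℕ) + 1 < m)]
  rw [hA, hB]
  -- decompose the lists
  set k : ℕ := m - 1 - (j : ℕ) with hk
  have hk1 : 1 ≤ k := by omega
  have hC : (List.range (m-1)).map (fun i => if i < (j:ℕ) then i else i + 1)
      = List.range (j:ℕ) ++ ((List.range k).map (fun x => (j:ℕ) + 1 + x)) := by
    have hm1 : m - 1 = (j : ℕ) + k := by omega
    rw [hm1, List.range_add, List.map_append, List.map_map]
    congr 1
    · refine (List.map_congr_left ?_).trans (List.map_id _)
      intro a ha
      simp only [List.mem_range] at ha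
      simp [ha]
    · apply List.map_congr_left
      intro a _
      simp only [Function.comp_apply]
      rw [if_neg (by omega)]
      omega
  have hD : List.range m
      = List.range (j:ℕ) ++ [(j:ℕ)] ++ ((List.range k).map (fun x => (j:ℕ) + 1 + x)) := by
    have hm1 : m = ((j : ℕ) + 1) + k := by omega
    have h := List.range_add (n := (j:ℕ)+1) (m := k)
    rw [← hm1] at h
    rw [h]
    congr 1
    exact List.range_succ
  rw [hC, hD]
  have hk2 : List.range k = 0 :: List.map Nat.succ (List.range (k-1)) := by
    have : k = (k - 1) + 1 := by omega
    rw [this, List.range_succ_eq_map]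
    simp
  rw [hk2]
  simp only [List.foldl_append, List.map_cons, List.foldl_cons]
  congr 1
  -- key step
  set W₁ := List.foldl F W (List.range (j:ℕ))
  have hjm : (j : ℕ) < m := j.isLt
  show F (F W₁ (j:ℕ)) ((j:ℕ) + 1 + 0) = F W₁ ((j:ℕ) + 1 + 0)
  simp only [hF, add_zero, dif_pos hjm, dif_pos hj]
  have : (⟨(j:ℕ), hjm⟩ : Fin m) = j := rfl
  rw [this]
  exact bfgsUpdate_parallel W₁ (S j) (Y j) (S ⟨(j:ℕ)+1, hj⟩) (Y ⟨(j:ℕ)+1, hj⟩)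
    (ne_of_gt (hpos _)) τ hτ hs
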